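/- arXiv:2503.21264 — 6 statements merged into one kernel-verified Lean document; each statement's English description precedes it below -/
import Mathlib

section
/- A grounding claim Γ < α is provable in the calculus G (with the Amalgamation rule, without the ∗ rules for disjunction) if and only if Γ is a finite union of grounding bars for α. -/
inductive Formula : Type
  | atom : ℕ → Formula
  | bot : Formula
  | and : Formula → Formula → Formula
  | or : Formula → Formula → Formula
  | neg : Formula → Formula
  deriving DecidableEq

namespace Formula

/-- The grounding calculus `G`, parameterised by whether the `∗` rules for
disjunction (and negated conjunction) are present (`star`) and whether the
Amalgamation rule is present (`am`).  Grounds are finite sets of formulas,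
so set contraction is implicit. -/
inductive Proves (star am : Bool) : Finset Formula → Formula → Prop
  -- 0-premiss rules
  | andI0 (α β : Formula) : Proves star am {α, β} (α.and β)
  | orI0l (α β : Formula) : Proves star am {α} (α.or β)
  | orI0r (α β : Formula) : Proves star am {β} (α.or β)
  | orI0both (α β : Formula) (h : star = true) : Proves star am {α, β} (α.or β)
  | nandI0l (α β : Formula) : Proves star am {α.neg} (α.and β).neg
  | nandI0r (α β : Formula) : Proves star am {β.neg} (α.and β).neg
  | nandI0both (α β : Formula) (h : star = true) : Proves star am {α.neg, β.neg} (α.and β).neg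
  | norI0 (α β : Formula) : Proves star am {α.neg, β.neg} (α.or β).neg
  | nnI0 (α : Formula) : Proves star am {α} α.neg.neg
  -- introduction rules
  | andI {Γ Δ : Finset Formula} {α β : Formula} : Proves star am Γ α → Proves star am Δ β →
      Proves star am (Γ ∪ Δ) (α.and β)
  | orIl {Γ : Finset Formula} {α β : Formula} : Proves star am Γ α → Proves star am Γ (α.or β)
  | orIr {Γ : Finset Formula} {α β : Formula} : Proves star am Γ β → Proves star am Γ (α.or β)
  | orIboth {Γ Δ : Finset Formula} {α β : Formula} (h : star = true) : Proves star am Γ α → Proves star am Δ β →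
      Proves star am (Γ ∪ Δ) (α.or β)
  | nandIl {Γ : Finset Formula} {α β : Formula} : Proves star am Γ α.neg → Proves star am Γ (α.and β).neg
  | nandIr {Γ : Finset Formula} {α β : Formula} : Proves star am Γ β.neg → Proves star am Γ (α.and β).neg
  | nandIboth {Γ Δ : Finset Formula} {α β : Formula} (h : star = true) : Proves star am Γ α.neg → Proves star am Δ β.neg →
      Proves star am (Γ ∪ Δ) (α.and β).neg
  | norI {Γ Δ : Finset Formula} {α β : Formula} : Proves star am Γ α.neg → Proves star am Δ β.neg →
      Proves star am (Γ ∪ Δ) (α.or β).neg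
  | nnI {Γ : Finset Formula} {α : Formula} : Proves star am Γ α → Proves star am Γ α.neg.neg
  -- elimination rules (replacing a member of the ground)
  | andE {Γ : Finset Formula} {β γ δ : Formula} (h : (β.and γ) ∈ Γ) : Proves star am Γ δ →
      Proves star am (Γ.erase (β.and γ) ∪ {β, γ}) δ
  | orEl {Γ : Finset Formula} {β γ δ : Formula} (h : (β.or γ) ∈ Γ) : Proves star am Γ δ →
      Proves star am (Γ.erase (β.or γ) ∪ {β}) δ
  | orEr {Γ : Finset Formula} {β γ δ : Formula} (h : (β.or γ) ∈ Γ) : Proves star am Γ δ →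
      Proves star am (Γ.erase (β.or γ) ∪ {γ}) δ
  | orEboth {Γ : Finset Formula} {β γ δ : Formula} (hs : star = true) (h : (β.or γ) ∈ Γ) : Proves star am Γ δ →
      Proves star am (Γ.erase (β.or γ) ∪ {β, γ}) δ
  | nandEl {Γ : Finset Formula} {β γ δ : Formula} (h : (β.and γ).neg ∈ Γ) : Proves star am Γ δ →
      Proves star am (Γ.erase (β.and γ).neg ∪ {β.neg}) δ
  | nandEr {Γ : Finset Formula} {β γ δ : Formula} (h : (β.and γ).neg ∈ Γ) : Proves star am Γ δ →
      Proves star am (Γ.erase (β.and γ).neg ∪ {γ.neg}) δ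
  | nandEboth {Γ : Finset Formula} {β γ δ : Formula} (hs : star = true) (h : (β.and γ).neg ∈ Γ) : Proves star am Γ δ →
      Proves star am (Γ.erase (β.and γ).neg ∪ {β.neg, γ.neg}) δ
  | norE {Γ : Finset Formula} {β γ δ : Formula} (h : (β.or γ).neg ∈ Γ) : Proves star am Γ δ →
      Proves star am (Γ.erase (β.or γ).neg ∪ {β.neg, γ.neg}) δ
  | nnE {Γ : Finset Formula} {β δ : Formula} (h : β.neg.neg ∈ Γ) : Proves star am Γ δ →
      Proves star am (Γ.erase β.neg.neg ∪ {β}) δ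
  -- Amalgamation
  | am {Γ Δ : Finset Formula} {α : Formula} (h : am = true) : Proves star am Γ α → Proves star am Δ α →
      Proves star am (Γ ∪ Δ) α

/-- The formula at a node, with `~` prefixed when the node is negative. -/
def sgn (pos : Bool) (α : Formula) : Formula := if pos then α else α.neg

/-- `BarRel star pos α B`: `B` is (the set of signed formulas of) a bar of some
selection tree of the syntactic tree of `α`, where `α`'s root lies at polarity
`pos` (positive/negative according to the parity of `~`-nodes above it).
The trivial bar `{sgn pos α}` (containing the root) is included; feeble nodes
(positive `∨`-nodes, negative `∧`-nodes) have exactly one child kept, or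
possibly both when the `∗` rules are present (`star = true`). -/
inductive BarRel (star : Bool) : Bool → Formula → Finset Formula → Prop
  | triv (pos : Bool) (α : Formula) : BarRel star pos α {sgn pos α}
  | and_pos {β γ : Formula} {B₁ B₂ : Finset Formula} : BarRel star true β B₁ → BarRel star true γ B₂ →
      BarRel star true (β.and γ) (B₁ ∪ B₂)
  | and_neg_l {β γ : Formula} {B : Finset Formula} : BarRel star false β B → BarRel star false (β.and γ) B
  | and_neg_r {β γ : Formula} {B : Finset Formula} : BarRel star false γ B → BarRel star false (β.and γ) B
  | and_neg_both {β γ : Formula} {B₁ B₂ : Finset Formula} (h : star = true) :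
      BarRel star false β B₁ → BarRel star false γ B₂ →
      BarRel star false (β.and γ) (B₁ ∪ B₂)
  | or_pos_l {β γ : Formula} {B : Finset Formula} : BarRel star true β B → BarRel star true (β.or γ) B
  | or_pos_r {β γ : Formula} {B : Finset Formula} : BarRel star true γ B → BarRel star true (β.or γ) B
  | or_pos_both {β γ : Formula} {B₁ B₂ : Finset Formula} (h : star = true) :
      BarRel star true β B₁ → BarRel star true γ B₂ →
      BarRel star true (β.or γ) (B₁ ∪ B₂)
  | or_neg {β γ : Formula} {B₁ B₂ : Finset Formula} : BarRel star false β B₁ → BarRel star false γ B₂ →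
      BarRel star false (β.or γ) (B₁ ∪ B₂)
  | neg (pos) {β : Formula} {B : Finset Formula} : BarRel star (!pos) β B → BarRel star pos β.neg B

/-- A grounding bar for `α`: a bar of a selection tree of `α` (with `~`
prefixed at negative nodes) which is non-trivial, i.e. neither contains the
root nor the (signed) only child of the root, which amounts to the bar not
being the singleton of `α` itself. -/
def GroundingBar (star : Bool) (α : Formula) (B : Finset Formula) : Prop :=
  BarRel star true α B ∧ B ≠ {α}

/-- Subformula relation. -/
inductive Sub : Formula → Formula → Prop
  | refl (α : Formula) : Sub α α
  | and_l {α β γ : Formula} : Sub α β → Sub α (β.and γ)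
  | and_r {α β γ : Formula} : Sub α γ → Sub α (β.and γ)
  | or_l {α β γ : Formula} : Sub α β → Sub α (β.or γ)
  | or_r {α β γ : Formula} : Sub α γ → Sub α (β.or γ)
  | neg {α β : Formula} : Sub α β → Sub α β.neg

/-- Proper subformula. -/
def ProperSub (α β : Formula) : Prop := Sub α β ∧ α ≠ β

end Formula

namespace Formula

/-- Size of a formula. -/
def fsize : Formula → ℕ
  | atom _ => 1
  | bot => 1
  | and a b => fsize a + fsize b + 1
  | or a b => fsize a + fsize b + 1
  | neg a => fsize a + 1

lemma fsize_pos (a : Formula) : 0 < fsize a := by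
  cases a <;> simp [fsize]

lemma bar_nonempty {star : Bool} {pos : Bool} {β : Formula} {B : Finset Formula}
    (h : BarRel star pos β B) : B.Nonempty := by
  induction h with
  | triv pos α => exact Finset.singleton_nonempty _
  | and_pos _ _ ih1 ih2 => exact ih1.inl
  | and_neg_l _ ih => exact ih
  | and_neg_r _ ih => exact ih
  | and_neg_both _ _ _ ih1 ih2 => exact ih1.inl
  | or_pos_l _ ih => exact ih
  | or_pos_r _ ih => exact ih
  | or_pos_both _ _ _ ih1 ih2 => exact ih1.inl
  | or_neg _ _ ih1 ih2 => exact ih1.inl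
  | neg pos _ ih => exact ih

lemma bar_size {pos : Bool} {β : Formula} {B : Finset Formula}
    (h : BarRel false pos β B) : ∀ x ∈ B, fsize x ≤ fsize (sgn pos β) := by
  induction h with
  | triv pos α => intro x hx; simp at hx; subst hx; exact le_rfl
  | and_pos h1 h2 ih1 ih2 =>
      intro x hx
      simp only [sgn, if_true, fsize] at ih1 ih2 ⊢
      rcases Finset.mem_union.mp hx with h | h
      · have := ih1 x h; omega
      · have := ih2 x h; omega
  | and_neg_l h ih =>
      intro x hx
      simp only [sgn, if_false, fsize, Bool.false_eq_true, if_neg] at ih ⊢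
      have := ih x hx; omega
  | and_neg_r h ih =>
      intro x hx
      simp only [sgn, if_false, fsize, Bool.false_eq_true, if_neg] at ih ⊢
      have := ih x hx; omega
  | and_neg_both h => exact absurd h (by simp)
  | or_pos_l h ih =>
      intro x hx
      simp only [sgn, if_true, fsize] at ih ⊢
      have := ih x hx; omega
  | or_pos_r h ih =>
      intro x hx
      simp only [sgn, if_true, fsize] at ih ⊢
      have := ih x hx; omega
  | or_pos_both h => exact absurd h (by simp)
  | or_neg h1 h2 ih1 ih2 =>
      intro x hx
      simp only [sgn, fsize, Bool.false_eq_true, if_neg, if_false] at ih1 ih2 ⊢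
      rcases Finset.mem_union.mp hx with h | h
      · have := ih1 x h; omega
      · have := ih2 x h; omega
  | neg pos h ih =>
      intro x hx
      cases pos <;> simp only [sgn, fsize, Bool.not_true, Bool.not_false,
        Bool.false_eq_true, if_neg, if_true, if_false] at ih ⊢ <;>
        · have := ih x hx; simp [fsize] at this ⊢; omega

/-- One-step elimination shapes (star-free). -/
inductive Elim1 : Formula → Finset Formula → Prop
  | andE (β γ : Formula) : Elim1 (β.and γ) {β, γ}
  | orEl (β γ : Formula) : Elim1 (β.or γ) {β}
  | orEr (β γ : Formula) : Elim1 (β.or γ) {γ}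
  | nandEl (β γ : Formula) : Elim1 (β.and γ).neg {β.neg}
  | nandEr (β γ : Formula) : Elim1 (β.and γ).neg {γ.neg}
  | norE (β γ : Formula) : Elim1 (β.or γ).neg {β.neg, γ.neg}
  | nnE (β : Formula) : Elim1 β.neg.neg {β}

lemma elim1_size {x : Formula} {S : Finset Formula} (h : Elim1 x S) :
    ∀ s ∈ S, fsize s < fsize x := by
  cases h <;> intro s hs <;> simp at hs <;>
    first
      | (rcases hs with rfl | rfl <;> simp [fsize] <;> omega)
      | (subst hs; simp [fsize] <;> omega)

lemma elim1_nonempty {x : Formula} {S : Finset Formula} (h : Elim1 x S) : S.Nonempty := by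
  cases h <;> simp

lemma bar_of_elim1 (pos : Bool) (δ : Formula) (S : Finset Formula)
    (h : Elim1 (sgn pos δ) S) : BarRel false pos δ S := by
  cases pos with
  | true =>
      simp only [sgn, if_true] at h
      cases h with
      | andE β γ =>
          have := BarRel.and_pos (star := false) (BarRel.triv true β) (BarRel.triv true γ)
          simpa [sgn] using this
      | orEl β γ =>
          have := BarRel.or_pos_l (star := false) (γ := γ) (BarRel.triv true β)
          simpa [sgn] using this
      | orEr β γ =>
          have := BarRel.or_pos_r (star := false) (β := β) (BarRel.triv true γ)
          simpa [sgn] using this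
      | nandEl β γ =>
          have := BarRel.neg (star := false) true
            (BarRel.and_neg_l (γ := γ) (BarRel.triv false β))
          simpa [sgn] using this
      | nandEr β γ =>
          have := BarRel.neg (star := false) true
            (BarRel.and_neg_r (β := β) (BarRel.triv false γ))
          simpa [sgn] using this
      | norE β γ =>
          have := BarRel.neg (star := false) true
            (BarRel.or_neg (BarRel.triv false β) (BarRel.triv false γ))
          simpa [sgn] using this
      | nnE β =>
          have := BarRel.neg (star := false) true
            (BarRel.neg (star := false) false (BarRel.triv true β))
          simpa [sgn] using this
  | false =>
      simp only [sgn, Bool.false_eq_true, if_neg, if_false] at h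
      cases h with
      | nandEl β γ =>
          have := BarRel.and_neg_l (star := false) (γ := γ) (BarRel.triv false β)
          simpa [sgn] using this
      | nandEr β γ =>
          have := BarRel.and_neg_r (star := false) (β := β) (BarRel.triv false γ)
          simpa [sgn] using this
      | norE β γ =>
          have := BarRel.or_neg (star := false) (BarRel.triv false β) (BarRel.triv false γ)
          simpa [sgn] using this
      | nnE β =>
          have := BarRel.neg (star := false) false (BarRel.triv true β)
          simpa [sgn] using this

end Formula

namespace Formula

lemma union_erase_union {B₁ B₂ : Finset Formula} {x : Formula} {S : Finset Formula}
    (h : x ∉ B₂) : (B₁ ∪ B₂).erase x ∪ S = (B₁.erase x ∪ S) ∪ B₂ := by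
  ext a
  by_cases hax : a = x
  · subst hax
    simp only [Finset.mem_union, Finset.mem_erase]
    tauto
  · simp only [Finset.mem_union, Finset.mem_erase, hax]
    tauto

lemma union_erase_union2 {B₁ B₂ : Finset Formula} {x : Formula} {S : Finset Formula} :
    (B₁ ∪ B₂).erase x ∪ S = (B₁.erase x ∪ S) ∪ (B₂.erase x ∪ S) := by
  ext a
  simp [Finset.mem_erase]
  tauto

lemma bar_elim {pos : Bool} {δ : Formula} {B : Finset Formula} {x : Formula}
    {S : Finset Formula} (hb : BarRel false pos δ B) (hx : x ∈ B) (he : Elim1 x S) :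
    BarRel false pos δ (B.erase x ∪ S) := by
  induction hb with
  | triv pos α =>
      have hxe : x = sgn pos α := by simpa using hx
      subst hxe
      simpa [Finset.erase_singleton] using bar_of_elim1 pos α S he
  | @and_pos β γ B₁ B₂ h1 h2 ih1 ih2 =>
      by_cases m1 : x ∈ B₁ <;> by_cases m2 : x ∈ B₂
      · rw [union_erase_union2]
        exact BarRel.and_pos (ih1 m1) (ih2 m2)
      · rw [union_erase_union m2]
        exact BarRel.and_pos (ih1 m1) h2
      · rw [Finset.union_comm B₁ B₂, union_erase_union m1, Finset.union_comm]
        exact BarRel.and_pos h1 (ih2 m2)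
      · exact absurd (Finset.mem_union.mp hx) (by tauto)
  | and_neg_l h ih => exact BarRel.and_neg_l (ih hx)
  | and_neg_r h ih => exact BarRel.and_neg_r (ih hx)
  | and_neg_both h => exact absurd h (by simp)
  | or_pos_l h ih => exact BarRel.or_pos_l (ih hx)
  | or_pos_r h ih => exact BarRel.or_pos_r (ih hx)
  | or_pos_both h => exact absurd h (by simp)
  | @or_neg β γ B₁ B₂ h1 h2 ih1 ih2 =>
      by_cases m1 : x ∈ B₁ <;> by_cases m2 : x ∈ B₂
      · rw [union_erase_union2]
        exact BarRel.or_neg (ih1 m1) (ih2 m2)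
      · rw [union_erase_union m2]
        exact BarRel.or_neg (ih1 m1) h2
      · rw [Finset.union_comm B₁ B₂, union_erase_union m1, Finset.union_comm]
        exact BarRel.or_neg h1 (ih2 m2)
      · exact absurd (Finset.mem_union.mp hx) (by tauto)
  | neg pos h ih => exact BarRel.neg pos (ih hx)

end Formula

namespace Formula

/-- Gluing: if cutting `x` against ground `B` is admissible, then from a proof
using `x` in the ground we can pass to the ground with `B` instead. -/
lemma helper1 {x : Formula} {B : Finset Formula}
    (cut : ∀ Γ δ, x ∈ Γ → Proves false true Γ δ → Proves false true (Γ.erase x ∪ B) δ)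
    {Γ₀ : Finset Formula} {δ : Formula}
    (h : Proves false true (Γ₀ ∪ {x}) δ) : Proves false true (Γ₀ ∪ B) δ := by
  have h2 := cut _ _ (by simp) h
  by_cases hx : x ∈ Γ₀ ∪ B
  · have h3 := Proves.am rfl h h2
    have he : (Γ₀ ∪ {x}) ∪ ((Γ₀ ∪ {x}).erase x ∪ B) = Γ₀ ∪ B := by
      have hx' := Finset.mem_union.mp hx
      ext a
      by_cases hax : a = x
      · subst hax
        simp only [Finset.mem_union, Finset.mem_erase, Finset.mem_singleton]
        tauto
      · simp only [Finset.mem_union, Finset.mem_erase, Finset.mem_singleton, hax]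
        tauto
    rwa [he] at h3
  · have he : (Γ₀ ∪ {x}).erase x ∪ B = Γ₀ ∪ B := by
      simp only [Finset.mem_union] at hx
      push_neg at hx
      ext a
      by_cases hax : a = x
      · subst hax
        simp only [Finset.mem_union, Finset.mem_erase, Finset.mem_singleton]
        tauto
      · simp only [Finset.mem_union, Finset.mem_erase, Finset.mem_singleton, hax]
        tauto
    rwa [he] at h2

lemma pair_as_unions (x y : Formula) :
    ({x, y} : Finset Formula) = ({y} ∪ {x} : Finset Formula) := by
  ext a; simp; tauto

/-- Cut with a bar: if `B` is a bar for `γ` (at polarity `pos`), any use of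
`sgn pos γ` in a ground can be replaced by `B`. -/
lemma bar_cut {pos : Bool} {γ : Formula} {B : Finset Formula}
    (hb : BarRel false pos γ B) :
    ∀ Γ δ, sgn pos γ ∈ Γ → Proves false true Γ δ →
      Proves false true (Γ.erase (sgn pos γ) ∪ B) δ := by
  induction hb with
  | triv pos α =>
      intro Γ δ hmem hp
      rwa [Finset.union_comm, ← Finset.insert_eq, Finset.insert_erase hmem]
  | @and_pos β γ B₁ B₂ h1 h2 ih1 ih2 =>
      intro Γ δ hmem hp
      simp only [sgn, if_true] at hmem ⊢
      have cut1 : ∀ Γ δ, β ∈ Γ → Proves false true Γ δ →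
          Proves false true (Γ.erase β ∪ B₁) δ := by
        intro Γ δ h hp; simpa [sgn] using ih1 Γ δ (by simpa [sgn] using h) hp
      have cut2 : ∀ Γ δ, γ ∈ Γ → Proves false true Γ δ →
          Proves false true (Γ.erase γ ∪ B₂) δ := by
        intro Γ δ h hp; simpa [sgn] using ih2 Γ δ (by simpa [sgn] using h) hp
      have step := Proves.andE hmem hp
      rw [pair_as_unions, ← Finset.union_assoc] at step
      have step2 := helper1 cut1 step
      rw [Finset.union_right_comm] at step2
      have step3 := helper1 cut2 step2
      rwa [Finset.union_assoc] at step3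
  | @and_neg_l β γ B h ih =>
      intro Γ δ hmem hp
      simp only [sgn, Bool.false_eq_true, if_false] at hmem ih ⊢
      exact helper1 ih (Proves.nandEl hmem hp)
  | @and_neg_r β γ B h ih =>
      intro Γ δ hmem hp
      simp only [sgn, Bool.false_eq_true, if_false] at hmem ih ⊢
      exact helper1 ih (Proves.nandEr hmem hp)
  | and_neg_both h => exact absurd h (by simp)
  | @or_pos_l β γ B h ih =>
      intro Γ δ hmem hp
      simp only [sgn, if_true] at hmem ih ⊢
      exact helper1 ih (Proves.orEl hmem hp)
  | @or_pos_r β γ B h ih =>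
      intro Γ δ hmem hp
      simp only [sgn, if_true] at hmem ih ⊢
      exact helper1 ih (Proves.orEr hmem hp)
  | or_pos_both h => exact absurd h (by simp)
  | @or_neg β γ B₁ B₂ h1 h2 ih1 ih2 =>
      intro Γ δ hmem hp
      simp only [sgn, Bool.false_eq_true, if_false] at hmem ih1 ih2 ⊢
      have step := Proves.norE hmem hp
      rw [pair_as_unions, ← Finset.union_assoc] at step
      have step2 := helper1 ih1 step
      rw [Finset.union_right_comm] at step2
      have step3 := helper1 ih2 step2
      rwa [Finset.union_assoc] at step3
  | @neg pos β B h ih =>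
      intro Γ δ hmem hp
      cases pos with
      | true =>
          simp only [sgn, if_true] at hmem ⊢
          simp only [sgn, Bool.not_true, Bool.false_eq_true, if_false] at ih
          exact ih Γ δ hmem hp
      | false =>
          simp only [sgn, Bool.false_eq_true, if_false] at hmem ⊢
          simp only [sgn, Bool.not_false, if_true] at ih
          exact helper1 ih (Proves.nnE hmem hp)

end Formula

namespace Formula

lemma bar_cut' {β : Formula} {B : Finset Formula} (hb : BarRel false true β B) :
    ∀ Γ δ, β ∈ Γ → Proves false true Γ δ → Proves false true (Γ.erase β ∪ B) δ := by
  intro Γ δ h hp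
  simpa [sgn] using bar_cut hb Γ δ (by simpa [sgn] using h) hp

lemma bar_cut_neg {β : Formula} {B : Finset Formula} (hb : BarRel false false β B) :
    ∀ Γ δ, β.neg ∈ Γ → Proves false true Γ δ → Proves false true (Γ.erase β.neg ∪ B) δ := by
  intro Γ δ h hp
  simpa [sgn] using bar_cut hb Γ δ (by simpa [sgn] using h) hp

lemma singleton_as_union (x : Formula) : ({x} : Finset Formula) = (∅ ∪ {x} : Finset Formula) := by
  simp

/-- A nontrivial grounding bar proves its formula. -/
lemma bar_proves {B : Finset Formula} {α : Formula}
    (hb : BarRel false true α B) (hne : B ≠ {α}) : Proves false true B α := by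
  cases hb with
  | triv =>
      exact absurd (by simp [sgn]) hne
  | @and_pos β γ B₁ B₂ h1 h2 =>
      have step : Proves false true (({γ} ∪ {β} : Finset Formula)) (β.and γ) := by
        rw [← pair_as_unions]; exact Proves.andI0 β γ
      have step2 := helper1 (bar_cut' h1) step
      rw [Finset.union_comm] at step2
      exact helper1 (bar_cut' h2) step2
  | @or_pos_l β γ B h =>
      have step : Proves false true ((∅ ∪ {β} : Finset Formula)) (β.or γ) := by
        rw [← singleton_as_union]; exact Proves.orI0l β γ
      simpa using helper1 (bar_cut' h) step
  | @or_pos_r β γ B h =>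
      have step : Proves false true ((∅ ∪ {γ} : Finset Formula)) (β.or γ) := by
        rw [← singleton_as_union]; exact Proves.orI0r β γ
      simpa using helper1 (bar_cut' h) step
  | or_pos_both h => exact absurd h (by simp)
  | @neg pos β B h =>
      -- here pos = true is forced, so h : BarRel false false β B
      simp only [Bool.not_true] at h
      cases h with
      | triv =>
          exact absurd (by simp [sgn]) hne
      | @and_neg_l β₁ β₂ B h' =>
          have step : Proves false true ((∅ ∪ {β₁.neg} : Finset Formula)) (β₁.and β₂).neg := by
            rw [← singleton_as_union]; exact Proves.nandI0l β₁ β₂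
          simpa using helper1 (bar_cut_neg h') step
      | @and_neg_r β₁ β₂ B h' =>
          have step : Proves false true ((∅ ∪ {β₂.neg} : Finset Formula)) (β₁.and β₂).neg := by
            rw [← singleton_as_union]; exact Proves.nandI0r β₁ β₂
          simpa using helper1 (bar_cut_neg h') step
      | and_neg_both h' => exact absurd h' (by simp)
      | @or_neg β₁ β₂ B₁ B₂ h1 h2 =>
          have step : Proves false true (({β₂.neg} ∪ {β₁.neg} : Finset Formula)) (β₁.or β₂).neg := by
            rw [← pair_as_unions]; exact Proves.norI0 β₁ β₂
          have step2 := helper1 (bar_cut_neg h1) step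
          rw [Finset.union_comm] at step2
          exact helper1 (bar_cut_neg h2) step2
      | @neg pos' β' B h' =>
          -- pos' = false forced; h' : BarRel false true β' B, α = β'.neg.neg
          simp only [Bool.not_false] at h'
          have step : Proves false true ((∅ ∪ {β'} : Finset Formula)) β'.neg.neg := by
            rw [← singleton_as_union]; exact Proves.nnI0 β'
          simpa using helper1 (bar_cut' h') step

/-- A nonempty union of grounding bars proves the formula. -/
lemma bars_to_proves {α : Formula} (𝒢 : Finset (Finset Formula)) (hne : 𝒢.Nonempty)
    (hbar : ∀ B ∈ 𝒢, GroundingBar false α B) : Proves false true (𝒢.sup id) α := by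
  induction 𝒢 using Finset.induction_on with
  | empty => exact absurd hne (by simp)
  | @insert B 𝒢 hB ih =>
      rcases Finset.eq_empty_or_nonempty 𝒢 with rfl | h𝒢
      · have hb := hbar B (by simp)
        simpa using bar_proves hb.1 hb.2
      · have hb := hbar B (by simp)
        have ih' := ih h𝒢 (fun C hC => hbar C (by simp [hC]))
        rw [Finset.sup_insert]
        exact Proves.am rfl (bar_proves hb.1 hb.2) ih'
end Formula

namespace Formula

lemma bar_ne {B : Finset Formula} {α : Formula} (hne : B.Nonempty)
    (h : ∀ x ∈ B, fsize x < fsize α) : B ≠ {α} := by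
  intro hEq
  obtain ⟨x, hx⟩ := hne
  have hlt := h x hx
  rw [hEq] at hx
  simp only [Finset.mem_singleton] at hx
  subst hx
  omega

lemma bar_neg_inv {β : Formula} {B : Finset Formula}
    (h : BarRel false true β.neg B) : BarRel false false β B := by
  cases h with
  | triv => simpa [sgn] using BarRel.triv (star := false) false β
  | neg pos h => simpa using h

lemma mem_sup_iff {𝒢 : Finset (Finset Formula)} {a : Formula} :
    a ∈ 𝒢.sup id ↔ ∃ B ∈ 𝒢, a ∈ B := by
  simp [Finset.mem_sup]

lemma sup_image2_union {𝒢 ℋ : Finset (Finset Formula)} (hG : 𝒢.Nonempty) (hH : ℋ.Nonempty) :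
    (Finset.image₂ (· ∪ ·) 𝒢 ℋ).sup id = 𝒢.sup id ∪ ℋ.sup id := by
  apply Finset.Subset.antisymm
  · intro a ha
    rw [mem_sup_iff] at ha
    obtain ⟨B, hB, haB⟩ := ha
    rw [Finset.mem_image₂] at hB
    obtain ⟨B₁, h1, B₂, h2, rfl⟩ := hB
    rcases Finset.mem_union.mp haB with h | h
    · exact Finset.mem_union_left _ (mem_sup_iff.mpr ⟨B₁, h1, h⟩)
    · exact Finset.mem_union_right _ (mem_sup_iff.mpr ⟨B₂, h2, h⟩)
  · intro a ha
    rcases Finset.mem_union.mp ha with h | h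
    · rw [mem_sup_iff] at h
      obtain ⟨B₁, h1, haB⟩ := h
      obtain ⟨B₂, h2⟩ := hH
      exact mem_sup_iff.mpr ⟨B₁ ∪ B₂, Finset.mem_image₂_of_mem h1 h2,
        Finset.mem_union_left _ haB⟩
    · rw [mem_sup_iff] at h
      obtain ⟨B₂, h2, haB⟩ := h
      obtain ⟨B₁, h1⟩ := hG
      exact mem_sup_iff.mpr ⟨B₁ ∪ B₂, Finset.mem_image₂_of_mem h1 h2,
        Finset.mem_union_right _ haB⟩

/-- The union-of-grounding-bars property. -/
def IsBars (α : Formula) (Γ : Finset Formula) : Prop :=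
  ∃ 𝒢 : Finset (Finset Formula), 𝒢.Nonempty ∧
    (∀ B ∈ 𝒢, GroundingBar false α B) ∧ Γ = 𝒢.sup id

lemma elim_step {Γ : Finset Formula} {δ x : Formula} {S : Finset Formula}
    (he : Elim1 x S) (hx : x ∈ Γ) (h : IsBars δ Γ) : IsBars δ (Γ.erase x ∪ S) := by
  obtain ⟨𝒢, hne, hbar, rfl⟩ := h
  refine ⟨𝒢.image (fun B => if x ∈ B then B.erase x ∪ S else B), hne.image _, ?_, ?_⟩
  · intro B' hB'
    rw [Finset.mem_image] at hB'
    obtain ⟨B, hB, rfl⟩ := hB'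
    by_cases hxB : x ∈ B
    · simp only [hxB, if_true]
      constructor
      · exact bar_elim (hbar B hB).1 hxB he
      · -- nontriviality by size
        intro hEq
        obtain ⟨s, hs⟩ := elim1_nonempty he
        have hsB : s ∈ B.erase x ∪ S := Finset.mem_union_right _ hs
        rw [hEq, Finset.mem_singleton] at hsB
        subst hsB
        have h1 := elim1_size he _ hs
        have h2 := bar_size (hbar B hB).1 x hxB
        simp only [sgn, if_true] at h2
        omega
    · simpa [hxB] using hbar B hB
  · obtain ⟨B₀, hB₀, hxB₀⟩ := mem_sup_iff.mp hx
    ext a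
    rw [mem_sup_iff]
    simp only [Finset.mem_image, Finset.mem_union, Finset.mem_erase, mem_sup_iff]
    constructor
    · rintro (⟨hax, ⟨B, hB, haB⟩⟩ | haS)
      · exact ⟨_, ⟨B, hB, rfl⟩, by by_cases hxB : x ∈ B <;> simp [hxB, Finset.mem_erase, hax, haB]⟩
      · exact ⟨_, ⟨B₀, hB₀, rfl⟩, by simp [hxB₀, haS]⟩
    · rintro ⟨B', ⟨B, hB, rfl⟩, haB'⟩
      by_cases hxB : x ∈ B
      · simp only [hxB, if_true, Finset.mem_union, Finset.mem_erase] at haB'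
        rcases haB' with ⟨hax, haB⟩ | haS
        · exact Or.inl ⟨hax, B, hB, haB⟩
        · exact Or.inr haS
      · simp only [hxB, if_false] at haB'
        have hax : a ≠ x := fun hEq => hxB (hEq ▸ haB')
        exact Or.inl ⟨hax, B, hB, haB'⟩

end Formula

namespace Formula

lemma isBars_of_bar_lt {B : Finset Formula} {δ : Formula}
    (hb : BarRel false true δ B) (h : ∀ x ∈ B, fsize x < fsize δ) : IsBars δ B :=
  ⟨{B}, by simp, by simp [GroundingBar, hb, bar_ne (bar_nonempty hb) h], by simp⟩

lemma isBars_mono {Γ : Finset Formula} {δ δ' : Formula} (h : IsBars δ Γ)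
    (hf : ∀ B, BarRel false true δ B → BarRel false true δ' B)
    (hsz : fsize δ < fsize δ') : IsBars δ' Γ := by
  obtain ⟨𝒢, hne, hbar, rfl⟩ := h
  exact ⟨𝒢, hne, fun B hB => ⟨hf B (hbar B hB).1,
    bar_ne (bar_nonempty (hbar B hB).1)
      (fun x hx => lt_of_le_of_lt (by simpa [sgn] using bar_size (hbar B hB).1 x hx) hsz)⟩, rfl⟩

lemma isBars_union2 {Γ Δ : Finset Formula} {δ₁ δ₂ δ' : Formula}
    (h1 : IsBars δ₁ Γ) (h2 : IsBars δ₂ Δ)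
    (hf : ∀ B₁ B₂, BarRel false true δ₁ B₁ → BarRel false true δ₂ B₂ →
      BarRel false true δ' (B₁ ∪ B₂))
    (hsz1 : fsize δ₁ < fsize δ') (hsz2 : fsize δ₂ < fsize δ') : IsBars δ' (Γ ∪ Δ) := by
  obtain ⟨𝒢, hgne, hgbar, rfl⟩ := h1
  obtain ⟨ℋ, hhne, hhbar, rfl⟩ := h2
  refine ⟨Finset.image₂ (· ∪ ·) 𝒢 ℋ, Finset.image₂_nonempty_iff.mpr ⟨hgne, hhne⟩, ?_,
    (sup_image2_union hgne hhne).symm⟩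
  intro B' hB'
  rw [Finset.mem_image₂] at hB'
  obtain ⟨B₁, hB₁, B₂, hB₂, rfl⟩ := hB'
  have hb1 := (hgbar B₁ hB₁).1
  have hb2 := (hhbar B₂ hB₂).1
  refine ⟨hf _ _ hb1 hb2, bar_ne ((bar_nonempty hb1).inl) ?_⟩
  intro x hx
  rcases Finset.mem_union.mp hx with h | h
  · exact lt_of_le_of_lt (by simpa [sgn] using bar_size hb1 x h) hsz1
  · exact lt_of_le_of_lt (by simpa [sgn] using bar_size hb2 x h) hsz2

lemma isBars_am {Γ Δ : Finset Formula} {δ : Formula} (h1 : IsBars δ Γ) (h2 : IsBars δ Δ) :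
    IsBars δ (Γ ∪ Δ) := by
  obtain ⟨𝒢, hgne, hgbar, rfl⟩ := h1
  obtain ⟨ℋ, hhne, hhbar, rfl⟩ := h2
  refine ⟨𝒢 ∪ ℋ, hgne.inl, ?_, (Finset.sup_union).symm⟩
  intro B hB
  rcases Finset.mem_union.mp hB with h | h
  · exact hgbar B h
  · exact hhbar B h

lemma proves_to_bars {Γ : Finset Formula} {α : Formula}
    (h : Proves false true Γ α) : IsBars α Γ := by
  induction h with
  | andI0 α β =>
      refine isBars_of_bar_lt ?_ ?_
      · have := BarRel.and_pos (star := false) (BarRel.triv true α) (BarRel.triv true β)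
        simpa [sgn] using this
      · intro x hx
        rcases Finset.mem_insert.mp hx with rfl | hx
        · simp [fsize] <;> omega
        · rw [Finset.mem_singleton] at hx; subst hx; simp [fsize] <;> omega
  | orI0l α β =>
      refine isBars_of_bar_lt ?_ ?_
      · have := BarRel.or_pos_l (star := false) (γ := β) (BarRel.triv true α)
        simpa [sgn] using this
      · intro x hx; rw [Finset.mem_singleton] at hx; subst hx; simp [fsize] <;> omega
  | orI0r α β =>
      refine isBars_of_bar_lt ?_ ?_
      · have := BarRel.or_pos_r (star := false) (β := α) (BarRel.triv true β)
        simpa [sgn] using this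
      · intro x hx; rw [Finset.mem_singleton] at hx; subst hx; simp [fsize] <;> omega
  | orI0both _ _ h => exact absurd h (by simp)
  | nandI0l α β =>
      refine isBars_of_bar_lt ?_ ?_
      · have := BarRel.neg (star := false) true
          (BarRel.and_neg_l (γ := β) (BarRel.triv false α))
        simpa [sgn] using this
      · intro x hx; rw [Finset.mem_singleton] at hx; subst hx
        have := fsize_pos β; simp [fsize] <;> omega
  | nandI0r α β =>
      refine isBars_of_bar_lt ?_ ?_
      · have := BarRel.neg (star := false) true
          (BarRel.and_neg_r (β := α) (BarRel.triv false β))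
        simpa [sgn] using this
      · intro x hx; rw [Finset.mem_singleton] at hx; subst hx
        have := fsize_pos α; simp [fsize] <;> omega
  | nandI0both _ _ h => exact absurd h (by simp)
  | norI0 α β =>
      refine isBars_of_bar_lt ?_ ?_
      · have := BarRel.neg (star := false) true
          (BarRel.or_neg (BarRel.triv false α) (BarRel.triv false β))
        simpa [sgn] using this
      · intro x hx
        rcases Finset.mem_insert.mp hx with rfl | hx
        · simp [fsize] <;> omega
        · rw [Finset.mem_singleton] at hx; subst hx; simp [fsize] <;> omega
  | nnI0 α =>
      refine isBars_of_bar_lt ?_ ?_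
      · exact BarRel.neg true (BarRel.neg false (by simpa [sgn] using BarRel.triv (star := false) true α))
      · intro x hx; rw [Finset.mem_singleton] at hx; subst hx; simp [fsize] <;> omega
  | @andI _ _ α β _ _ ih1 ih2 =>
      refine isBars_union2 ih1 ih2 (fun B₁ B₂ hb1 hb2 => BarRel.and_pos hb1 hb2) ?_ ?_
      · have := fsize_pos β; simp [fsize] <;> omega
      · have := fsize_pos α; simp [fsize] <;> omega
  | @orIl _ α β _ ih =>
      refine isBars_mono ih (fun B hb => BarRel.or_pos_l hb) ?_
      have := fsize_pos β; simp [fsize] <;> omega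
  | @orIr _ α β _ ih =>
      refine isBars_mono ih (fun B hb => BarRel.or_pos_r hb) ?_
      have := fsize_pos α; simp [fsize] <;> omega
  | orIboth h => exact absurd h (by simp)
  | @nandIl _ α β _ ih =>
      refine isBars_mono ih
        (fun B hb => BarRel.neg true (BarRel.and_neg_l (bar_neg_inv hb))) ?_
      have := fsize_pos β; simp [fsize] <;> omega
  | @nandIr _ α β _ ih =>
      refine isBars_mono ih
        (fun B hb => BarRel.neg true (BarRel.and_neg_r (bar_neg_inv hb))) ?_
      have := fsize_pos α; simp [fsize] <;> omega
  | nandIboth h => exact absurd h (by simp)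
  | @norI _ _ α β _ _ ih1 ih2 =>
      refine isBars_union2 ih1 ih2
        (fun B₁ B₂ hb1 hb2 =>
          BarRel.neg true (BarRel.or_neg (bar_neg_inv hb1) (bar_neg_inv hb2))) ?_ ?_
      · have := fsize_pos β; simp [fsize] <;> omega
      · have := fsize_pos α; simp [fsize] <;> omega
  | @nnI _ α _ ih =>
      refine isBars_mono ih (fun B hb => BarRel.neg true (BarRel.neg false hb)) ?_
      simp [fsize] <;> omega
  | andE h _ ih => exact elim_step (Elim1.andE _ _) h ih
  | orEl h _ ih => exact elim_step (Elim1.orEl _ _) h ih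
  | orEr h _ ih => exact elim_step (Elim1.orEr _ _) h ih
  | orEboth hs => exact absurd hs (by simp)
  | nandEl h _ ih => exact elim_step (Elim1.nandEl _ _) h ih
  | nandEr h _ ih => exact elim_step (Elim1.nandEr _ _) h ih
  | nandEboth hs => exact absurd hs (by simp)
  | norE h _ ih => exact elim_step (Elim1.norE _ _) h ih
  | nnE h _ ih => exact elim_step (Elim1.nnE _) h ih
  | am _ _ _ ih1 ih2 => exact isBars_am ih1 ih2

end Formula

open Formula

/-- `Γ < α` is provable in `G` (with Amalgamation, without the `∗` rules)
iff `Γ` is a finite union of grounding bars for `α`. -/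
theorem provable_iff_union_of_grounding_bars (Γ : Finset Formula) (α : Formula) :
    Proves false true Γ α ↔
      ∃ 𝒢 : Finset (Finset Formula), 𝒢.Nonempty ∧
        (∀ B ∈ 𝒢, GroundingBar false α B) ∧ Γ = 𝒢.sup id := by
  constructor
  · intro h
    exact proves_to_bars h
  · rintro ⟨𝒢, hne, hbar, rfl⟩
    exact bars_to_proves 𝒢 hne hbar
end

section
/- If Γ < α is provable in the calculus G, then every element of Γ is, up to a prefix of a single ~, a proper subformula of α: each γ ∈ Γ is either a proper subformula of α or of the form ~β for β a proper subformula of α. -/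
namespace Formula

def sizeF : Formula → ℕ
  | atom _ => 1
  | bot => 1
  | and a b => sizeF a + sizeF b + 1
  | or a b => sizeF a + sizeF b + 1
  | neg a => sizeF a + 1

lemma size_le_of_sub {a b : Formula} (h : Sub a b) : sizeF a ≤ sizeF b := by
  induction h <;> (try simp only [sizeF]) <;> omega

lemma sub_trans {a b c : Formula} (h1 : Sub a b) (h2 : Sub b c) : Sub a c := by
  induction h2 with
  | refl => exact h1
  | and_l _ ih => exact Sub.and_l ih
  | and_r _ ih => exact Sub.and_r ih
  | or_l _ ih => exact Sub.or_l ih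
  | or_r _ ih => exact Sub.or_r ih
  | neg _ ih => exact Sub.neg ih

lemma size_lt_of_sub_ne {a b : Formula} (h : Sub a b) (hne : a ≠ b) :
    sizeF a < sizeF b := by
  cases h with
  | refl => exact absurd rfl hne
  | and_l h => have := size_le_of_sub h; simp only [sizeF]; omega
  | and_r h => have := size_le_of_sub h; simp only [sizeF]; omega
  | or_l h => have := size_le_of_sub h; simp only [sizeF]; omega
  | or_r h => have := size_le_of_sub h; simp only [sizeF]; omega
  | neg h => have := size_le_of_sub h; simp only [sizeF]; omega

lemma ps_of_lt {a b : Formula} (hs : Sub a b) (hlt : sizeF a < sizeF b) :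
    ProperSub a b := ⟨hs, fun e => by subst e; omega⟩

lemma ps_trans {a b c : Formula} (h1 : ProperSub a b) (h2 : ProperSub b c) :
    ProperSub a c := by
  have l1 := size_le_of_sub h1.1
  have l2 := size_lt_of_sub_ne h2.1 h2.2
  exact ps_of_lt (sub_trans h1.1 h2.1) (by omega)

/-- The member property. -/
def Gd (δ γ : Formula) : Prop := ProperSub γ δ ∨ ∃ β, γ = β.neg ∧ ProperSub β δ

lemma Gd_step {α δ γ : Formula} (h : ProperSub α δ) (hg : Gd α γ) : Gd δ γ := by
  rcases hg with hp | ⟨β, rfl, hp⟩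
  · exact Or.inl (ps_trans hp h)
  · exact Or.inr ⟨β, rfl, ps_trans hp h⟩

lemma sub_neg_inv {γ β : Formula} (h : Sub γ β.neg) : γ = β.neg ∨ Sub γ β := by
  cases h with
  | refl => exact Or.inl rfl
  | neg h => exact Or.inr h

lemma Gd_neg_step {a δ γ : Formula} (hp : Sub a δ) (hlt : sizeF a < sizeF δ)
    (h : Gd a.neg γ) : Gd δ γ := by
  rcases h with ⟨s, ne⟩ | ⟨β, rfl, s, ne⟩
  · rcases sub_neg_inv s with rfl | s'
    · exact absurd rfl ne
    · have := size_le_of_sub s'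
      exact Or.inl (ps_of_lt (sub_trans s' hp) (by omega))
  · rcases sub_neg_inv s with rfl | s'
    · exact absurd rfl ne
    · have := size_le_of_sub s'
      exact Or.inr ⟨β, rfl, ps_of_lt (sub_trans s' hp) (by omega)⟩

/-- Key lemma: a strict subformula of a member inherits proper-subformula-hood. -/
lemma PS_of {γ x δ : Formula} (hs : Sub γ x) (hlt : sizeF γ < sizeF x)
    (h : Gd δ x) : ProperSub γ δ := by
  rcases h with ⟨s, ne⟩ | ⟨β, rfl, s, ne⟩
  · have := size_le_of_sub s
    exact ps_of_lt (sub_trans hs s) (by omega)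
  · rcases sub_neg_inv hs with rfl | hs'
    · omega
    · have l1 := size_le_of_sub hs'
      have l2 := size_lt_of_sub_ne s ne
      exact ps_of_lt (sub_trans hs' s) (by omega)

end Formula

open Formula

/-- Every member of a provable ground of `α` is, up to a prefix of a single
`~`, a proper subformula of `α`. -/
theorem ground_members_proper_subformulas (star am : Bool) (Γ : Finset Formula)
    (α : Formula) (h : Proves star am Γ α) :
    ∀ γ ∈ Γ, ProperSub γ α ∨ ∃ β, γ = β.neg ∧ ProperSub β α := by
  have main : ∀ γ ∈ Γ, Gd α γ := by
    induction h with
    | andI0 a b =>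
      intro γ hγ
      rcases Finset.mem_insert.1 hγ with rfl | hγ
      · exact Or.inl (ps_of_lt (Sub.and_l (Sub.refl _)) (by simp only [sizeF]; omega))
      · rcases Finset.mem_singleton.1 hγ with rfl
        exact Or.inl (ps_of_lt (Sub.and_r (Sub.refl _)) (by simp only [sizeF]; omega))
    | orI0l a b =>
      intro γ hγ; rcases Finset.mem_singleton.1 hγ with rfl
      exact Or.inl (ps_of_lt (Sub.or_l (Sub.refl _)) (by simp only [sizeF]; omega))
    | orI0r a b =>
      intro γ hγ; rcases Finset.mem_singleton.1 hγ with rfl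
      exact Or.inl (ps_of_lt (Sub.or_r (Sub.refl _)) (by simp only [sizeF]; omega))
    | orI0both a b _ =>
      intro γ hγ
      rcases Finset.mem_insert.1 hγ with rfl | hγ
      · exact Or.inl (ps_of_lt (Sub.or_l (Sub.refl _)) (by simp only [sizeF]; omega))
      · rcases Finset.mem_singleton.1 hγ with rfl
        exact Or.inl (ps_of_lt (Sub.or_r (Sub.refl _)) (by simp only [sizeF]; omega))
    | nandI0l a b =>
      intro γ hγ; rcases Finset.mem_singleton.1 hγ with rfl
      exact Or.inr ⟨a, rfl, ps_of_lt (Sub.neg (Sub.and_l (Sub.refl _)))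
        (by simp only [sizeF]; omega)⟩
    | nandI0r a b =>
      intro γ hγ; rcases Finset.mem_singleton.1 hγ with rfl
      exact Or.inr ⟨b, rfl, ps_of_lt (Sub.neg (Sub.and_r (Sub.refl _)))
        (by simp only [sizeF]; omega)⟩
    | nandI0both a b _ =>
      intro γ hγ
      rcases Finset.mem_insert.1 hγ with rfl | hγ
      · exact Or.inr ⟨a, rfl, ps_of_lt (Sub.neg (Sub.and_l (Sub.refl _)))
          (by simp only [sizeF]; omega)⟩
      · rcases Finset.mem_singleton.1 hγ with rfl
        exact Or.inr ⟨b, rfl, ps_of_lt (Sub.neg (Sub.and_r (Sub.refl _)))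
          (by simp only [sizeF]; omega)⟩
    | norI0 a b =>
      intro γ hγ
      rcases Finset.mem_insert.1 hγ with rfl | hγ
      · exact Or.inr ⟨a, rfl, ps_of_lt (Sub.neg (Sub.or_l (Sub.refl _)))
          (by simp only [sizeF]; omega)⟩
      · rcases Finset.mem_singleton.1 hγ with rfl
        exact Or.inr ⟨b, rfl, ps_of_lt (Sub.neg (Sub.or_r (Sub.refl _)))
          (by simp only [sizeF]; omega)⟩
    | nnI0 a =>
      intro γ hγ; rcases Finset.mem_singleton.1 hγ with rfl
      exact Or.inl (ps_of_lt (Sub.neg (Sub.neg (Sub.refl _))) (by simp only [sizeF]; omega))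
    | @andI Γ Δ a b _ _ ih1 ih2 =>
      intro γ hγ
      rcases Finset.mem_union.1 hγ with hγ | hγ
      · exact Gd_step (ps_of_lt (Sub.and_l (Sub.refl _)) (by simp only [sizeF]; omega)) (ih1 γ hγ)
      · exact Gd_step (ps_of_lt (Sub.and_r (Sub.refl _)) (by simp only [sizeF]; omega)) (ih2 γ hγ)
    | @orIl Γ a b _ ih =>
      intro γ hγ
      exact Gd_step (ps_of_lt (Sub.or_l (Sub.refl _)) (by simp only [sizeF]; omega)) (ih γ hγ)
    | @orIr Γ a b _ ih =>
      intro γ hγ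
      exact Gd_step (ps_of_lt (Sub.or_r (Sub.refl _)) (by simp only [sizeF]; omega)) (ih γ hγ)
    | @orIboth Γ Δ a b _ _ _ ih1 ih2 =>
      intro γ hγ
      rcases Finset.mem_union.1 hγ with hγ | hγ
      · exact Gd_step (ps_of_lt (Sub.or_l (Sub.refl _)) (by simp only [sizeF]; omega)) (ih1 γ hγ)
      · exact Gd_step (ps_of_lt (Sub.or_r (Sub.refl _)) (by simp only [sizeF]; omega)) (ih2 γ hγ)
    | @nandIl Γ a b _ ih =>
      intro γ hγ
      exact Gd_neg_step (Sub.neg (Sub.and_l (Sub.refl _))) (by simp only [sizeF]; omega) (ih γ hγ)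
    | @nandIr Γ a b _ ih =>
      intro γ hγ
      exact Gd_neg_step (Sub.neg (Sub.and_r (Sub.refl _))) (by simp only [sizeF]; omega) (ih γ hγ)
    | @nandIboth Γ Δ a b _ _ _ ih1 ih2 =>
      intro γ hγ
      rcases Finset.mem_union.1 hγ with hγ | hγ
      · exact Gd_neg_step (Sub.neg (Sub.and_l (Sub.refl _))) (by simp only [sizeF]; omega) (ih1 γ hγ)
      · exact Gd_neg_step (Sub.neg (Sub.and_r (Sub.refl _))) (by simp only [sizeF]; omega) (ih2 γ hγ)
    | @norI Γ Δ a b _ _ ih1 ih2 =>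
      intro γ hγ
      rcases Finset.mem_union.1 hγ with hγ | hγ
      · exact Gd_neg_step (Sub.neg (Sub.or_l (Sub.refl _))) (by simp only [sizeF]; omega) (ih1 γ hγ)
      · exact Gd_neg_step (Sub.neg (Sub.or_r (Sub.refl _))) (by simp only [sizeF]; omega) (ih2 γ hγ)
    | @nnI Γ a _ ih =>
      intro γ hγ
      exact Gd_step (ps_of_lt (Sub.neg (Sub.neg (Sub.refl _))) (by simp only [sizeF]; omega)) (ih γ hγ)
    | @andE Γ b c d hmem _ ih =>
      intro γ hγ
      rcases Finset.mem_union.1 hγ with hγ | hγ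
      · exact ih γ (Finset.mem_of_mem_erase hγ)
      · rcases Finset.mem_insert.1 hγ with rfl | hγ
        · exact Or.inl (PS_of (Sub.and_l (Sub.refl _)) (by simp only [sizeF]; omega) (ih _ hmem))
        · rcases Finset.mem_singleton.1 hγ with rfl
          exact Or.inl (PS_of (Sub.and_r (Sub.refl _)) (by simp only [sizeF]; omega) (ih _ hmem))
    | @orEl Γ b c d hmem _ ih =>
      intro γ hγ
      rcases Finset.mem_union.1 hγ with hγ | hγ
      · exact ih γ (Finset.mem_of_mem_erase hγ)
      · rcases Finset.mem_singleton.1 hγ with rfl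
        exact Or.inl (PS_of (Sub.or_l (Sub.refl _)) (by simp only [sizeF]; omega) (ih _ hmem))
    | @orEr Γ b c d hmem _ ih =>
      intro γ hγ
      rcases Finset.mem_union.1 hγ with hγ | hγ
      · exact ih γ (Finset.mem_of_mem_erase hγ)
      · rcases Finset.mem_singleton.1 hγ with rfl
        exact Or.inl (PS_of (Sub.or_r (Sub.refl _)) (by simp only [sizeF]; omega) (ih _ hmem))
    | @orEboth Γ b c d _ hmem _ ih =>
      intro γ hγ
      rcases Finset.mem_union.1 hγ with hγ | hγ
      · exact ih γ (Finset.mem_of_mem_erase hγ)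
      · rcases Finset.mem_insert.1 hγ with rfl | hγ
        · exact Or.inl (PS_of (Sub.or_l (Sub.refl _)) (by simp only [sizeF]; omega) (ih _ hmem))
        · rcases Finset.mem_singleton.1 hγ with rfl
          exact Or.inl (PS_of (Sub.or_r (Sub.refl _)) (by simp only [sizeF]; omega) (ih _ hmem))
    | @nandEl Γ b c d hmem _ ih =>
      intro γ hγ
      rcases Finset.mem_union.1 hγ with hγ | hγ
      · exact ih γ (Finset.mem_of_mem_erase hγ)
      · rcases Finset.mem_singleton.1 hγ with rfl
        exact Or.inr ⟨b, rfl, PS_of (Sub.neg (Sub.and_l (Sub.refl _)))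
          (by simp only [sizeF]; omega) (ih _ hmem)⟩
    | @nandEr Γ b c d hmem _ ih =>
      intro γ hγ
      rcases Finset.mem_union.1 hγ with hγ | hγ
      · exact ih γ (Finset.mem_of_mem_erase hγ)
      · rcases Finset.mem_singleton.1 hγ with rfl
        exact Or.inr ⟨c, rfl, PS_of (Sub.neg (Sub.and_r (Sub.refl _)))
          (by simp only [sizeF]; omega) (ih _ hmem)⟩
    | @nandEboth Γ b c d _ hmem _ ih =>
      intro γ hγ
      rcases Finset.mem_union.1 hγ with hγ | hγ
      · exact ih γ (Finset.mem_of_mem_erase hγ)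
      · rcases Finset.mem_insert.1 hγ with rfl | hγ
        · exact Or.inr ⟨b, rfl, PS_of (Sub.neg (Sub.and_l (Sub.refl _)))
            (by simp only [sizeF]; omega) (ih _ hmem)⟩
        · rcases Finset.mem_singleton.1 hγ with rfl
          exact Or.inr ⟨c, rfl, PS_of (Sub.neg (Sub.and_r (Sub.refl _)))
            (by simp only [sizeF]; omega) (ih _ hmem)⟩
    | @norE Γ b c d hmem _ ih =>
      intro γ hγ
      rcases Finset.mem_union.1 hγ with hγ | hγ
      · exact ih γ (Finset.mem_of_mem_erase hγ)
      · rcases Finset.mem_insert.1 hγ with rfl | hγ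
        · exact Or.inr ⟨b, rfl, PS_of (Sub.neg (Sub.or_l (Sub.refl _)))
            (by simp only [sizeF]; omega) (ih _ hmem)⟩
        · rcases Finset.mem_singleton.1 hγ with rfl
          exact Or.inr ⟨c, rfl, PS_of (Sub.neg (Sub.or_r (Sub.refl _)))
            (by simp only [sizeF]; omega) (ih _ hmem)⟩
    | @nnE Γ b d hmem _ ih =>
      intro γ hγ
      rcases Finset.mem_union.1 hγ with hγ | hγ
      · exact ih γ (Finset.mem_of_mem_erase hγ)
      · rcases Finset.mem_singleton.1 hγ with rfl
        exact Or.inl (PS_of (Sub.neg (Sub.neg (Sub.refl _))) (by simp only [sizeF]; omega) (ih _ hmem))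
    | @am Γ Δ a _ _ _ ih1 ih2 =>
      intro γ hγ
      rcases Finset.mem_union.1 hγ with hγ | hγ
      · exact ih1 γ hγ
      · exact ih2 γ hγ
  exact main
end

section
/- Grounds compose across conjunction: if Γ < α and Δ < β are provable in G, then Γ∪Δ < α∧β is provable in G; conversely, every ground of α∧β provable in G (without ∗ rules and without Amalgamation) either equals {α,β}, or is of the form Γ∪{β} with Γ < α provable, or {α}∪Δ with Δ < β provable, or Γ∪Δ with both Γ < α and Δ < β provable. -/
open Formula

def Decomp (Γ : Finset Formula) (α β : Formula) : Prop :=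
  Γ = {α, β} ∨
  (∃ Γ₁, Γ = Γ₁ ∪ {β} ∧ Proves false false Γ₁ α) ∨
  (∃ Δ, Γ = {α} ∪ Δ ∧ Proves false false Δ β) ∨
  (∃ Γ₁ Δ, Γ = Γ₁ ∪ Δ ∧ Proves false false Γ₁ α ∧ Proves false false Δ β)

lemma decomp_step {α β : Formula} {Γ : Finset Formula} (φ : Formula) (S : Finset Formula)
    (hZ : Proves false false S φ)
    (hE : ∀ (Θ : Finset Formula) (δ : Formula), φ ∈ Θ → Proves false false Θ δ →
      Proves false false (Θ.erase φ ∪ S) δ)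
    (hφ : φ ∈ Γ)
    (h : Decomp Γ α β) : Decomp (Γ.erase φ ∪ S) α β := by
  classical
  rcases h with h | ⟨Γ₁, rfl, h1⟩ | ⟨Δ, rfl, h2⟩ | ⟨Γ₁, Δ, rfl, h1, h2⟩
  · subst h
    by_cases ha : φ = α
    · subst ha
      by_cases hab : φ = β
      · subst hab
        refine Or.inr (Or.inr (Or.inr ⟨S, S, ?_, hZ, hZ⟩))
        ext x; simp [Finset.mem_erase, Finset.mem_union]
      · refine Or.inr (Or.inl ⟨S, ?_, hZ⟩)
        ext x
        simp only [Finset.mem_union, Finset.mem_erase, Finset.mem_insert,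
          Finset.mem_singleton]
        constructor
        · rintro (⟨hx, (rfl | rfl)⟩ | hx) <;> tauto
        · rintro (hx | rfl) <;> tauto
    · have hb : φ = β := by
        rcases Finset.mem_insert.1 hφ with h' | h'
        · exact absurd h' ha
        · exact Finset.mem_singleton.1 h'
      subst hb
      refine Or.inr (Or.inr (Or.inl ⟨S, ?_, hZ⟩))
      ext x
      simp only [Finset.mem_union, Finset.mem_erase, Finset.mem_insert,
        Finset.mem_singleton]
      constructor
      · rintro (⟨hx, (rfl | rfl)⟩ | hx) <;> tauto
      · rintro (rfl | hx) <;> tauto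
  · by_cases hb : φ = β
    · subst hb
      by_cases hin : φ ∈ Γ₁
      · refine Or.inr (Or.inr (Or.inr ⟨Γ₁.erase φ ∪ S, S, ?_, hE Γ₁ α hin h1, hZ⟩))
        ext x
        simp only [Finset.mem_union, Finset.mem_erase, Finset.mem_singleton]
        constructor
        · rintro (⟨hx, (h' | rfl)⟩ | hx) <;> tauto
        · rintro ((⟨hx, h'⟩ | hx) | hx) <;> tauto
      · refine Or.inr (Or.inr (Or.inr ⟨Γ₁, S, ?_, h1, hZ⟩))
        ext x
        simp only [Finset.mem_union, Finset.mem_erase, Finset.mem_singleton]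
        constructor
        · rintro (⟨hx, (h' | rfl)⟩ | hx) <;> tauto
        · rintro (hx | hx)
          · exact Or.inl ⟨fun h' => hin (h' ▸ hx), Or.inl hx⟩
          · tauto
    · have hin : φ ∈ Γ₁ := by
        rcases Finset.mem_union.1 hφ with h' | h'
        · exact h'
        · exact absurd (Finset.mem_singleton.1 h') hb
      refine Or.inr (Or.inl ⟨Γ₁.erase φ ∪ S, ?_, hE Γ₁ α hin h1⟩)
      ext x
      simp only [Finset.mem_union, Finset.mem_erase, Finset.mem_singleton]
      constructor
      · rintro (⟨hx, (h' | rfl)⟩ | hx) <;> tauto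
      · rintro ((⟨hx, h'⟩ | hx) | rfl)
        · tauto
        · tauto
        · exact Or.inl ⟨Ne.symm hb, Or.inr rfl⟩
  · by_cases ha : φ = α
    · subst ha
      by_cases hin : φ ∈ Δ
      · refine Or.inr (Or.inr (Or.inr ⟨S, Δ.erase φ ∪ S, ?_, hZ, hE Δ β hin h2⟩))
        ext x
        simp only [Finset.mem_union, Finset.mem_erase, Finset.mem_singleton]
        constructor
        · rintro (⟨hx, (rfl | h')⟩ | hx) <;> tauto
        · rintro (hx | (⟨hx, h'⟩ | hx)) <;> tauto
      · refine Or.inr (Or.inr (Or.inr ⟨S, Δ, ?_, hZ, h2⟩))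
        ext x
        simp only [Finset.mem_union, Finset.mem_erase, Finset.mem_singleton]
        constructor
        · rintro (⟨hx, (rfl | h')⟩ | hx) <;> tauto
        · rintro (hx | hx)
          · tauto
          · exact Or.inl ⟨fun h' => hin (h' ▸ hx), Or.inr hx⟩
    · have hin : φ ∈ Δ := by
        rcases Finset.mem_union.1 hφ with h' | h'
        · exact absurd (Finset.mem_singleton.1 h') ha
        · exact h'
      refine Or.inr (Or.inr (Or.inl ⟨Δ.erase φ ∪ S, ?_, hE Δ β hin h2⟩))
      ext x
      simp only [Finset.mem_union, Finset.mem_erase, Finset.mem_singleton]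
      constructor
      · rintro (⟨hx, (rfl | h')⟩ | hx) <;> tauto
      · rintro (rfl | (⟨hx, h'⟩ | hx))
        · exact Or.inl ⟨Ne.symm ha, Or.inl rfl⟩
        · tauto
        · tauto
  · by_cases h1' : φ ∈ Γ₁ <;> by_cases h2' : φ ∈ Δ
    · refine Or.inr (Or.inr (Or.inr ⟨Γ₁.erase φ ∪ S, Δ.erase φ ∪ S, ?_,
        hE Γ₁ α h1' h1, hE Δ β h2' h2⟩))
      ext x
      simp only [Finset.mem_union, Finset.mem_erase]
      tauto
    · refine Or.inr (Or.inr (Or.inr ⟨Γ₁.erase φ ∪ S, Δ, ?_, hE Γ₁ α h1' h1, h2⟩))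
      ext x
      simp only [Finset.mem_union, Finset.mem_erase]
      constructor
      · rintro (⟨hx, (h' | h')⟩ | hx) <;> tauto
      · rintro ((⟨hx, h'⟩ | hx) | hx)
        · tauto
        · tauto
        · exact Or.inl ⟨fun h' => h2' (h' ▸ hx), Or.inr hx⟩
    · refine Or.inr (Or.inr (Or.inr ⟨Γ₁, Δ.erase φ ∪ S, ?_, h1, hE Δ β h2' h2⟩))
      ext x
      simp only [Finset.mem_union, Finset.mem_erase]
      constructor
      · rintro (⟨hx, (h' | h')⟩ | hx) <;> tauto
      · rintro (hx | (⟨hx, h'⟩ | hx))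
        · exact Or.inl ⟨fun h' => h1' (h' ▸ hx), Or.inl hx⟩
        · tauto
        · tauto
    · exact absurd (Finset.mem_union.1 hφ) (by tauto)

lemma decomp_of_proves : ∀ (Γ : Finset Formula) (δ : Formula), Proves false false Γ δ →
    ∀ α β, δ = α.and β → Decomp Γ α β := by
  intro Γ δ h
  induction h with
  | andI0 a b =>
      intro α β hab
      injection hab with h1 h2; subst h1; subst h2
      exact Or.inl rfl
  | orI0l a b => intro α β hab; exact Formula.noConfusion hab
  | orI0r a b => intro α β hab; exact Formula.noConfusion hab
  | orI0both a b hs => exact absurd hs (by simp)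
  | nandI0l a b => intro α β hab; exact Formula.noConfusion hab
  | nandI0r a b => intro α β hab; exact Formula.noConfusion hab
  | nandI0both a b hs => exact absurd hs (by simp)
  | norI0 a b => intro α β hab; exact Formula.noConfusion hab
  | nnI0 a => intro α β hab; exact Formula.noConfusion hab
  | andI p1 p2 ih1 ih2 =>
      intro α β hab
      injection hab with h1 h2; subst h1; subst h2
      exact Or.inr (Or.inr (Or.inr ⟨_, _, rfl, p1, p2⟩))
  | orIl p ih => intro α β hab; exact Formula.noConfusion hab
  | orIr p ih => intro α β hab; exact Formula.noConfusion hab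
  | orIboth hs p1 p2 ih1 ih2 => exact absurd hs (by simp)
  | nandIl p ih => intro α β hab; exact Formula.noConfusion hab
  | nandIr p ih => intro α β hab; exact Formula.noConfusion hab
  | nandIboth hs p1 p2 ih1 ih2 => exact absurd hs (by simp)
  | norI p1 p2 ih1 ih2 => intro α β hab; exact Formula.noConfusion hab
  | nnI p ih => intro α β hab; exact Formula.noConfusion hab
  | andE hm p ih =>
      intro α β hab
      exact decomp_step _ _ (Proves.andI0 _ _)
        (fun Θ δ' hm' hp => Proves.andE hm' hp) hm (ih α β hab)
  | orEl hm p ih =>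
      intro α β hab
      exact decomp_step _ _ (Proves.orI0l _ _)
        (fun Θ δ' hm' hp => Proves.orEl hm' hp) hm (ih α β hab)
  | orEr hm p ih =>
      intro α β hab
      exact decomp_step _ _ (Proves.orI0r _ _)
        (fun Θ δ' hm' hp => Proves.orEr hm' hp) hm (ih α β hab)
  | orEboth hs hm p ih => exact absurd hs (by simp)
  | nandEl hm p ih =>
      intro α β hab
      exact decomp_step _ _ (Proves.nandI0l _ _)
        (fun Θ δ' hm' hp => Proves.nandEl hm' hp) hm (ih α β hab)
  | nandEr hm p ih =>
      intro α β hab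
      exact decomp_step _ _ (Proves.nandI0r _ _)
        (fun Θ δ' hm' hp => Proves.nandEr hm' hp) hm (ih α β hab)
  | nandEboth hs hm p ih => exact absurd hs (by simp)
  | norE hm p ih =>
      intro α β hab
      exact decomp_step _ _ (Proves.norI0 _ _)
        (fun Θ δ' hm' hp => Proves.norE hm' hp) hm (ih α β hab)
  | nnE hm p ih =>
      intro α β hab
      exact decomp_step _ _ (Proves.nnI0 _)
        (fun Θ δ' hm' hp => Proves.nnE hm' hp) hm (ih α β hab)
  | am ha p1 p2 ih1 ih2 => exact absurd ha (by simp)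


/-- Grounds compose across conjunction, and conversely every ground of a
conjunction (in `G` without `∗` rules and without Amalgamation) decomposes. -/
theorem ground_conjunction :
    (∀ (star am : Bool) (Γ Δ : Finset Formula) (α β : Formula),
      Proves star am Γ α → Proves star am Δ β →
        Proves star am (Γ ∪ Δ) (α.and β)) ∧
    (∀ (Γ : Finset Formula) (α β : Formula),
      Proves false false Γ (α.and β) →
        Γ = {α, β} ∨
        (∃ Γ₁, Γ = Γ₁ ∪ {β} ∧ Proves false false Γ₁ α) ∨
        (∃ Δ, Γ = {α} ∪ Δ ∧ Proves false false Δ β) ∨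
        (∃ Γ₁ Δ, Γ = Γ₁ ∪ Δ ∧ Proves false false Γ₁ α ∧ Proves false false Δ β)) := by
  exact ⟨fun star am Γ Δ α β h1 h2 => Proves.andI h1 h2,
    fun Γ α β h => decomp_of_proves Γ _ h α β rfl⟩
end

section
/- Double-negation grounds coincide: Γ < ~~α is provable in G if and only if Γ < α is provable in G or Γ = {α}. -/
open Formula

private lemma gdn_aux (star : Bool) {Γ : Finset Formula} {φ : Formula}
    (h : Proves star false Γ φ) :
    ∀ α, φ = α.neg.neg → (Proves star false Γ α ∨ Γ = {α}) := by
  induction h with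
  | andI0 a b => intro α hφ; exact Formula.noConfusion hφ
  | orI0l a b => intro α hφ; exact Formula.noConfusion hφ
  | orI0r a b => intro α hφ; exact Formula.noConfusion hφ
  | orI0both a b hs => intro α hφ; exact Formula.noConfusion hφ
  | nandI0l a b => intro α hφ
                   injection hφ with h1; exact Formula.noConfusion h1
  | nandI0r a b => intro α hφ
                   injection hφ with h1; exact Formula.noConfusion h1
  | nandI0both a b hs => intro α hφ
                         injection hφ with h1; exact Formula.noConfusion h1
  | norI0 a b => intro α hφ
                 injection hφ with h1; exact Formula.noConfusion h1
  | nnI0 a => intro α hφ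
              injection hφ with h1; injection h1 with h2
              exact Or.inr (by rw [h2])
  | andI hp hq ihp ihq => intro α hφ; exact Formula.noConfusion hφ
  | orIl hp ihp => intro α hφ; exact Formula.noConfusion hφ
  | orIr hp ihp => intro α hφ; exact Formula.noConfusion hφ
  | orIboth hs hp hq ihp ihq => intro α hφ; exact Formula.noConfusion hφ
  | nandIl hp ihp => intro α hφ
                     injection hφ with h1; exact Formula.noConfusion h1
  | nandIr hp ihp => intro α hφ
                     injection hφ with h1; exact Formula.noConfusion h1
  | nandIboth hs hp hq ihp ihq => intro α hφ
                                  injection hφ with h1; exact Formula.noConfusion h1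
  | norI hp hq ihp ihq => intro α hφ
                          injection hφ with h1; exact Formula.noConfusion h1
  | nnI hp ihp => intro α hφ
                  injection hφ with h1; injection h1 with h2
                  subst h2; exact Or.inl hp
  | andE hm hp ihp =>
      intro α hφ
      rcases ihp α hφ with hα | hΓ
      · exact Or.inl (Proves.andE hm hα)
      · subst hΓ
        rw [Finset.mem_singleton] at hm
        subst hm
        simp only [Finset.erase_singleton, Finset.empty_union]
        exact Or.inl (Proves.andI0 _ _)
  | orEl hm hp ihp =>
      intro α hφ
      rcases ihp α hφ with hα | hΓ
      · exact Or.inl (Proves.orEl hm hα)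
      · subst hΓ
        rw [Finset.mem_singleton] at hm
        subst hm
        simp only [Finset.erase_singleton, Finset.empty_union]
        exact Or.inl (Proves.orI0l _ _)
  | orEr hm hp ihp =>
      intro α hφ
      rcases ihp α hφ with hα | hΓ
      · exact Or.inl (Proves.orEr hm hα)
      · subst hΓ
        rw [Finset.mem_singleton] at hm
        subst hm
        simp only [Finset.erase_singleton, Finset.empty_union]
        exact Or.inl (Proves.orI0r _ _)
  | orEboth hs hm hp ihp =>
      intro α hφ
      rcases ihp α hφ with hα | hΓ
      · exact Or.inl (Proves.orEboth hs hm hα)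
      · subst hΓ
        rw [Finset.mem_singleton] at hm
        subst hm
        simp only [Finset.erase_singleton, Finset.empty_union]
        exact Or.inl (Proves.orI0both _ _ hs)
  | nandEl hm hp ihp =>
      intro α hφ
      rcases ihp α hφ with hα | hΓ
      · exact Or.inl (Proves.nandEl hm hα)
      · subst hΓ
        rw [Finset.mem_singleton] at hm
        subst hm
        simp only [Finset.erase_singleton, Finset.empty_union]
        exact Or.inl (Proves.nandI0l _ _)
  | nandEr hm hp ihp =>
      intro α hφ
      rcases ihp α hφ with hα | hΓ
      · exact Or.inl (Proves.nandEr hm hα)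
      · subst hΓ
        rw [Finset.mem_singleton] at hm
        subst hm
        simp only [Finset.erase_singleton, Finset.empty_union]
        exact Or.inl (Proves.nandI0r _ _)
  | nandEboth hs hm hp ihp =>
      intro α hφ
      rcases ihp α hφ with hα | hΓ
      · exact Or.inl (Proves.nandEboth hs hm hα)
      · subst hΓ
        rw [Finset.mem_singleton] at hm
        subst hm
        simp only [Finset.erase_singleton, Finset.empty_union]
        exact Or.inl (Proves.nandI0both _ _ hs)
  | norE hm hp ihp =>
      intro α hφ
      rcases ihp α hφ with hα | hΓ
      · exact Or.inl (Proves.norE hm hα)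
      · subst hΓ
        rw [Finset.mem_singleton] at hm
        subst hm
        simp only [Finset.erase_singleton, Finset.empty_union]
        exact Or.inl (Proves.norI0 _ _)
  | nnE hm hp ihp =>
      intro α hφ
      rcases ihp α hφ with hα | hΓ
      · exact Or.inl (Proves.nnE hm hα)
      · subst hΓ
        rw [Finset.mem_singleton] at hm
        subst hm
        simp only [Finset.erase_singleton, Finset.empty_union]
        exact Or.inl (Proves.nnI0 _)
  | am ham => exact absurd ham (by simp)

/-- Double-negation grounds coincide: `Γ < ~~α` is provable iff `Γ < α` is
provable or `Γ = {α}` (in `G` without Amalgamation). -/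
theorem ground_double_negation (star : Bool) (Γ : Finset Formula) (α : Formula) :
    Proves star false Γ α.neg.neg ↔ (Proves star false Γ α ∨ Γ = {α}) := by
  constructor
  · intro h
    exact gdn_aux star h α rfl
  · rintro (h | rfl)
    · exact Proves.nnI h
    · exact Proves.nnI0 α
end

section
/- Grounds of a negated conjunction select a conjunct: Γ < ~(α∧β) is provable in G (without Amalgamation and without ∗ rules) if and only if Γ = {~α}, or Γ = {~β}, or Γ < ~α is provable, or Γ < ~β is provable. -/
open Formula

theorem nand_aux {Γ : Finset Formula} {δ : Formula} (h : Proves false false Γ δ) :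
    ∀ α β : Formula, δ = (α.and β).neg →
      (Γ = {α.neg} ∨ Γ = {β.neg} ∨
       Proves false false Γ α.neg ∨ Proves false false Γ β.neg) := by
  induction h with
  | andI0 α' β' => intro α β h; exact absurd h (by simp)
  | orI0l α' β' => intro α β h; exact absurd h (by simp)
  | orI0r α' β' => intro α β h; exact absurd h (by simp)
  | orI0both α' β' hs => exact absurd hs (by simp)
  | nandI0l α' β' =>
      intro α β h
      obtain ⟨rfl, rfl⟩ : α' = α ∧ β' = β := by
        injection h with h'; injection h' with h1 h2; exact ⟨h1, h2⟩
      exact Or.inl rfl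
  | nandI0r α' β' =>
      intro α β h
      obtain ⟨rfl, rfl⟩ : α' = α ∧ β' = β := by
        injection h with h'; injection h' with h1 h2; exact ⟨h1, h2⟩
      exact Or.inr (Or.inl rfl)
  | nandI0both _ _ hs => exact absurd hs (by simp)
  | norI0 α' β' => intro α β h; injection h with h'; exact absurd h' (by simp)
  | nnI0 α' => intro α β h; injection h with h'; exact absurd h' (by simp)
  | andI _ _ _ _ => intro α β h; exact absurd h (by simp)
  | orIl _ _ => intro α β h; exact absurd h (by simp)
  | orIr _ _ => intro α β h; exact absurd h (by simp)
  | orIboth hs _ _ => exact absurd hs (by simp)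
  | nandIl hp _ =>
      intro α β h
      obtain ⟨rfl, rfl⟩ : _ = α ∧ _ = β := by
        injection h with h'; injection h' with h1 h2; exact ⟨h1, h2⟩
      exact Or.inr (Or.inr (Or.inl hp))
  | nandIr hp _ =>
      intro α β h
      obtain ⟨rfl, rfl⟩ : _ = α ∧ _ = β := by
        injection h with h'; injection h' with h1 h2; exact ⟨h1, h2⟩
      exact Or.inr (Or.inr (Or.inr hp))
  | nandIboth hs _ _ => exact absurd hs (by simp)
  | norI _ _ _ _ => intro α β h; injection h with h'; exact absurd h' (by simp)
  | nnI _ _ => intro α β h; injection h with h'; exact absurd h' (by simp)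
  | andE hm hp ih =>
      intro α β h
      rcases ih α β h with h1 | h1 | h1 | h1
      · rw [h1] at hm; simp at hm
      · rw [h1] at hm; simp at hm
      · exact Or.inr (Or.inr (Or.inl (Proves.andE hm h1)))
      · exact Or.inr (Or.inr (Or.inr (Proves.andE hm h1)))
  | orEl hm hp ih =>
      intro α β h
      rcases ih α β h with h1 | h1 | h1 | h1
      · rw [h1] at hm; simp at hm
      · rw [h1] at hm; simp at hm
      · exact Or.inr (Or.inr (Or.inl (Proves.orEl hm h1)))
      · exact Or.inr (Or.inr (Or.inr (Proves.orEl hm h1)))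
  | orEr hm hp ih =>
      intro α β h
      rcases ih α β h with h1 | h1 | h1 | h1
      · rw [h1] at hm; simp at hm
      · rw [h1] at hm; simp at hm
      · exact Or.inr (Or.inr (Or.inl (Proves.orEr hm h1)))
      · exact Or.inr (Or.inr (Or.inr (Proves.orEr hm h1)))
  | orEboth hs _ _ _ => exact absurd hs (by simp)
  | @nandEl Γ' β' γ' δ' hm hp ih =>
      intro α β h
      rcases ih α β h with h1 | h1 | h1 | h1
      · subst h1
        simp only [Finset.mem_singleton] at hm
        obtain rfl : α = β'.and γ' := by
          injection hm with h'; exact h'.symm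
        refine Or.inr (Or.inr (Or.inl ?_))
        have : (({(β'.and γ').neg} : Finset Formula).erase (β'.and γ').neg ∪ {β'.neg})
            = ({β'.neg} : Finset Formula) := by simp
        rw [this]
        exact Proves.nandI0l β' γ'
      · subst h1
        simp only [Finset.mem_singleton] at hm
        obtain rfl : β = β'.and γ' := by
          injection hm with h'; exact h'.symm
        refine Or.inr (Or.inr (Or.inr ?_))
        have : (({(β'.and γ').neg} : Finset Formula).erase (β'.and γ').neg ∪ {β'.neg})
            = ({β'.neg} : Finset Formula) := by simp
        rw [this]
        exact Proves.nandI0l β' γ'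
      · exact Or.inr (Or.inr (Or.inl (Proves.nandEl hm h1)))
      · exact Or.inr (Or.inr (Or.inr (Proves.nandEl hm h1)))
  | @nandEr Γ' β' γ' δ' hm hp ih =>
      intro α β h
      rcases ih α β h with h1 | h1 | h1 | h1
      · subst h1
        simp only [Finset.mem_singleton] at hm
        obtain rfl : α = β'.and γ' := by
          injection hm with h'; exact h'.symm
        refine Or.inr (Or.inr (Or.inl ?_))
        have : (({(β'.and γ').neg} : Finset Formula).erase (β'.and γ').neg ∪ {γ'.neg})
            = ({γ'.neg} : Finset Formula) := by simp
        rw [this]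
        exact Proves.nandI0r β' γ'
      · subst h1
        simp only [Finset.mem_singleton] at hm
        obtain rfl : β = β'.and γ' := by
          injection hm with h'; exact h'.symm
        refine Or.inr (Or.inr (Or.inr ?_))
        have : (({(β'.and γ').neg} : Finset Formula).erase (β'.and γ').neg ∪ {γ'.neg})
            = ({γ'.neg} : Finset Formula) := by simp
        rw [this]
        exact Proves.nandI0r β' γ'
      · exact Or.inr (Or.inr (Or.inl (Proves.nandEr hm h1)))
      · exact Or.inr (Or.inr (Or.inr (Proves.nandEr hm h1)))
  | nandEboth hs _ _ _ => exact absurd hs (by simp)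
  | @norE Γ' β' γ' δ' hm hp ih =>
      intro α β h
      rcases ih α β h with h1 | h1 | h1 | h1
      · subst h1
        simp only [Finset.mem_singleton] at hm
        obtain rfl : α = β'.or γ' := by
          injection hm with h'; exact h'.symm
        refine Or.inr (Or.inr (Or.inl ?_))
        have : (({(β'.or γ').neg} : Finset Formula).erase (β'.or γ').neg ∪ {β'.neg, γ'.neg})
            = ({β'.neg, γ'.neg} : Finset Formula) := by simp
        rw [this]
        exact Proves.norI0 β' γ'
      · subst h1
        simp only [Finset.mem_singleton] at hm
        obtain rfl : β = β'.or γ' := by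
          injection hm with h'; exact h'.symm
        refine Or.inr (Or.inr (Or.inr ?_))
        have : (({(β'.or γ').neg} : Finset Formula).erase (β'.or γ').neg ∪ {β'.neg, γ'.neg})
            = ({β'.neg, γ'.neg} : Finset Formula) := by simp
        rw [this]
        exact Proves.norI0 β' γ'
      · exact Or.inr (Or.inr (Or.inl (Proves.norE hm h1)))
      · exact Or.inr (Or.inr (Or.inr (Proves.norE hm h1)))
  | @nnE Γ' β' δ' hm hp ih =>
      intro α β h
      rcases ih α β h with h1 | h1 | h1 | h1
      · subst h1
        simp only [Finset.mem_singleton] at hm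
        obtain rfl : α = β'.neg := by
          injection hm with h'; exact h'.symm
        refine Or.inr (Or.inr (Or.inl ?_))
        have : (({β'.neg.neg} : Finset Formula).erase β'.neg.neg ∪ {β'})
            = ({β'} : Finset Formula) := by simp
        rw [this]
        exact Proves.nnI0 β'
      · subst h1
        simp only [Finset.mem_singleton] at hm
        obtain rfl : β = β'.neg := by
          injection hm with h'; exact h'.symm
        refine Or.inr (Or.inr (Or.inr ?_))
        have : (({β'.neg.neg} : Finset Formula).erase β'.neg.neg ∪ {β'})
            = ({β'} : Finset Formula) := by simp
        rw [this]
        exact Proves.nnI0 β'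
      · exact Or.inr (Or.inr (Or.inl (Proves.nnE hm h1)))
      · exact Or.inr (Or.inr (Or.inr (Proves.nnE hm h1)))
  | am hs _ _ _ _ => exact absurd hs (by simp)

/-- Grounds of a negated conjunction select a conjunct (in `G` without
Amalgamation and without the `∗` rules). -/
theorem ground_negated_conjunction (Γ : Finset Formula) (α β : Formula) :
    Proves false false Γ (α.and β).neg ↔
      (Γ = {α.neg} ∨ Γ = {β.neg} ∨
       Proves false false Γ α.neg ∨ Proves false false Γ β.neg) := by
  constructor
  · intro h; exact nand_aux h α β rfl
  · rintro (rfl | rfl | h | h)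
    · exact Proves.nandI0l α β
    · exact Proves.nandI0r α β
    · exact Proves.nandIl h
    · exact Proves.nandIr h
end

section
/- With the ∗ rules included, the provable grounding claims strictly increase: {α, β} < α∨β is provable in G with the ∗ rules but not provable in G without the ∗ rules and without Amalgamation, for distinct sentence letters α and β. -/
open Formula

lemma aux_key (m n : ℕ) {Γ : Finset Formula} {δ : Formula}
    (hp : Proves false false Γ δ) :
    (∀ k, δ ≠ Formula.atom k) ∧
    (δ = (Formula.atom m).or (Formula.atom n) →
      Γ = {Formula.atom m} ∨ Γ = {Formula.atom n}) := by
  induction hp with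
  | andI0 α β => exact ⟨by simp, by simp⟩
  | orI0l α β =>
      refine ⟨by simp, ?_⟩
      rintro heq
      injection heq with h1 h2
      subst h1; exact Or.inl rfl
  | orI0r α β =>
      refine ⟨by simp, ?_⟩
      rintro heq
      injection heq with h1 h2
      subst h2; exact Or.inr rfl
  | orI0both α β hs => exact absurd hs (by simp)
  | nandI0l α β => exact ⟨by simp, by simp⟩
  | nandI0r α β => exact ⟨by simp, by simp⟩
  | nandI0both α β hs => exact absurd hs (by simp)
  | norI0 α β => exact ⟨by simp, by simp⟩
  | nnI0 α => exact ⟨by simp, by simp⟩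
  | andI h1 h2 ih1 ih2 => exact ⟨by simp, by simp⟩
  | orIl h1 ih =>
      refine ⟨by simp, ?_⟩
      rintro heq
      injection heq with h1 h2
      subst h1
      exact absurd rfl (ih.1 m)
  | orIr h1 ih =>
      refine ⟨by simp, ?_⟩
      rintro heq
      injection heq with h1 h2
      subst h2
      exact absurd rfl (ih.1 n)
  | orIboth hs h1 h2 ih1 ih2 => exact absurd hs (by simp)
  | nandIl h1 ih => exact ⟨by simp, by simp⟩
  | nandIr h1 ih => exact ⟨by simp, by simp⟩
  | nandIboth hs h1 h2 ih1 ih2 => exact absurd hs (by simp)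
  | norI h1 h2 ih1 ih2 => exact ⟨by simp, by simp⟩
  | nnI h1 ih => exact ⟨by simp, by simp⟩
  | andE hmem h1 ih =>
      refine ⟨ih.1, ?_⟩
      intro heq
      rcases ih.2 heq with h | h <;> rw [h] at hmem <;> simp at hmem
  | orEl hmem h1 ih =>
      refine ⟨ih.1, ?_⟩
      intro heq
      rcases ih.2 heq with h | h <;> rw [h] at hmem <;> simp at hmem
  | orEr hmem h1 ih =>
      refine ⟨ih.1, ?_⟩
      intro heq
      rcases ih.2 heq with h | h <;> rw [h] at hmem <;> simp at hmem
  | orEboth hs hmem h1 ih => exact absurd hs (by simp)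
  | nandEl hmem h1 ih =>
      refine ⟨ih.1, ?_⟩
      intro heq
      rcases ih.2 heq with h | h <;> rw [h] at hmem <;> simp at hmem
  | nandEr hmem h1 ih =>
      refine ⟨ih.1, ?_⟩
      intro heq
      rcases ih.2 heq with h | h <;> rw [h] at hmem <;> simp at hmem
  | nandEboth hs hmem h1 ih => exact absurd hs (by simp)
  | norE hmem h1 ih =>
      refine ⟨ih.1, ?_⟩
      intro heq
      rcases ih.2 heq with h | h <;> rw [h] at hmem <;> simp at hmem
  | nnE hmem h1 ih =>
      refine ⟨ih.1, ?_⟩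
      intro heq
      rcases ih.2 heq with h | h <;> rw [h] at hmem <;> simp at hmem
  | am ha h1 h2 ih1 ih2 => exact absurd ha (by simp)

/-- With the `∗` rules, `{p, q} < p ∨ q` becomes provable, while it is not
provable without the `∗` rules and without Amalgamation, for distinct
sentence letters `p`, `q`. -/
theorem star_rules_strictly_stronger (m n : ℕ) (h : m ≠ n) :
    Proves true true {Formula.atom m, Formula.atom n}
        ((Formula.atom m).or (Formula.atom n)) ∧
    ¬ Proves false false {Formula.atom m, Formula.atom n}
        ((Formula.atom m).or (Formula.atom n)) := by
  constructor
  · exact Proves.orI0both _ _ rfl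
  · intro hp
    rcases (aux_key m n hp).2 rfl with heq | heq
    · have : Formula.atom n ∈ ({Formula.atom m, Formula.atom n} : Finset Formula) := by simp
      rw [heq] at this
      simp at this
      exact h this.symm
    · have : Formula.atom m ∈ ({Formula.atom m, Formula.atom n} : Finset Formula) := by simp
      rw [heq] at this
      simp at this
      exact h this
end
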